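/- Suppose (i_k)_{k≤n} and (j_k)_{k≤n} are strictly increasing (n+1)-tuples from a set A, where A has the 'one-step exchange' property: for any α < min of the tuple and any k, replacing the k-th coordinate j_k of a tuple by any element i_k of A with i_{k-1} < i_k < j_k preserves satisfaction of all formulas with parameters below α. Then the tuples ⟨i_0,…,i_n⟩ and ⟨j_0,…,j_n⟩ satisfy the same formulas with parameters below min(i_0, j_0). -/
import Mathlib


open Ordinal

/-- if `(i_k)_{k ≤ n}` and `(j_k)_{k ≤ n}` are strictly increasing
`(n+1)`-tuples from a class `A` with the one-step exchange property -- for any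
formula `φ`, parameter `β` below the tuple, and strictly increasing tuple `v`
from `A`, replacing the `k`-th coordinate `v k` by `x ∈ A` with
`v l < x` for `l < k` and `x < v k` preserves satisfaction -- then the tuples
`⟨i_0,…,i_n⟩` and `⟨j_0,…,j_n⟩` satisfy the same formulas with parameters below
`min (i_0, j_0)`.  (The chain of equivalences from Proposition 8.) -/
theorem exchange_tuples_satisfy_same (n : ℕ) (A : Set Ordinal)
    (Sat : ℕ → Ordinal → (Fin (n+1) → Ordinal) → Prop)
    (hex : ∀ (φ : ℕ) (β : Ordinal) (v : Fin (n+1) → Ordinal) (k : Fin (n+1))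
      (x : Ordinal), StrictMono v → (∀ l, v l ∈ A) → x ∈ A →
      β < v 0 → β < x → (∀ l, l < k → v l < x) → x < v k →
      (Sat φ β v ↔ Sat φ β (Function.update v k x)))
    (i j : Fin (n+1) → Ordinal)
    (hi : StrictMono i) (hj : StrictMono j)
    (hiA : ∀ k, i k ∈ A) (hjA : ∀ k, j k ∈ A)
    (hij : ∀ k, i k < j k) :
    ∀ (φ : ℕ) (β : Ordinal), β < i 0 → β < j 0 → (Sat φ β i ↔ Sat φ β j) := by
  intro φ β hβi hβj
  -- hybrid tuples
  set w : ℕ → (Fin (n+1) → Ordinal) :=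
    fun m k => if (k : ℕ) < m then i k else j k with hw
  have hwsm : ∀ m, StrictMono (w m) := by
    intro m k l hkl
    simp only [hw]
    by_cases hk : (k : ℕ) < m
    · by_cases hl : (l : ℕ) < m
      · simpa [hk, hl] using hi hkl
      · simpa [hk, hl] using (hij k).trans_le (hj.monotone hkl.le)
    · have hl : ¬ (l : ℕ) < m := fun h => hk (lt_trans (by exact_mod_cast hkl) h)
      simpa [hk, hl] using hj hkl
  have hwA : ∀ m l, w m l ∈ A := by
    intro m l
    simp only [hw]
    by_cases hl : (l : ℕ) < m <;> simp [hl, hiA, hjA]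
  have hw0 : ∀ m, β < w m 0 := by
    intro m
    simp only [hw]
    by_cases h : (0 : ℕ) < m <;> simp [h, hβi, hβj]
  have key : ∀ m, m ≤ n + 1 → (Sat φ β j ↔ Sat φ β (w m)) := by
    intro m
    induction m with
    | zero =>
      intro _
      have : w 0 = j := by funext k; simp [hw]
      rw [this]
    | succ m ih =>
      intro hm
      have hm' : m < n + 1 := hm
      rw [ih (Nat.le_of_succ_le hm)]
      have hupd : Function.update (w m) ⟨m, hm'⟩ (i ⟨m, hm'⟩) = w (m + 1) := by
        funext k
        by_cases hk : k = ⟨m, hm'⟩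
        · subst hk; simp [hw]
        · have hk' : (k : ℕ) ≠ m := fun h => hk (Fin.ext h)
          have : ((k : ℕ) < m + 1) ↔ ((k : ℕ) < m) := by omega
          simp [Function.update_of_ne hk, hw, this]
      rw [← hupd]
      refine hex φ β (w m) ⟨m, hm'⟩ (i ⟨m, hm'⟩) (hwsm m) (hwA m) (hiA _)
        (hw0 m) (hβi.trans_le (hi.monotone (Fin.zero_le _))) ?_ ?_
      · intro l hl
        have hl' : (l : ℕ) < m := hl
        simp only [hw, if_pos hl']
        exact hi hl
      · simp only [hw]
        rw [if_neg (lt_irrefl m)]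
        exact hij _
  have := key (n + 1) le_rfl
  have hwi : w (n + 1) = i := by
    funext k; simp [hw, k.isLt]
  rw [hwi] at this
  exact this.symm
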